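/- For n ≥ 1, consider the family of Boolean-valued classifiers on ordered pairs of distinct elements of Fin n of the form c_π(i, j) = decide (π i < π j), indexed by all permutations π of Fin n. If T is a finite set of ordered pairs (i, j) ∈ Fin n × Fin n with i ≠ j such that for every labeling g : T → Bool there exists a permutation π of Fin n with decide (π i < π j) = g (i, j) for all (i, j) ∈ T (i.e., the family shatters T), then |T| ≤ n − 1. Hence the VC dimension of this family is at most n − 1. -/

import Mathlib

/-- The family of classifiers `(i,j) ↦ decide (π i < π j)` on ordered pairs of
distinct elements of `Fin n`, indexed by permutations `π` of `Fin n`, has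
VC dimension at most `n - 1`: any finite set `T` of pairs of distinct elements
that it shatters satisfies `|T| ≤ n - 1`. -/
theorem vc_dim_order_classifiers_le (n : ℕ) (hn : 1 ≤ n) (T : Finset (Fin n × Fin n))
    (hdist : ∀ p ∈ T, p.1 ≠ p.2)
    (hshatter : ∀ g : Fin n × Fin n → Bool, ∃ π : Equiv.Perm (Fin n),
      ∀ p ∈ T, decide (π p.1 < π p.2) = g p) :
    T.card ≤ n - 1 := by
  classical
  -- the coordinate-sum linear functional
  set f : (Fin n → ℝ) →ₗ[ℝ] ℝ := ∑ i : Fin n, LinearMap.proj i with hfdef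
  have hf_apply : ∀ x : Fin n → ℝ, f x = ∑ i, x i := by
    intro x; simp [hfdef]
  -- the vectors e_{p.1} - e_{p.2}
  set v : ↥T → (Fin n → ℝ) :=
    fun p => Pi.single p.1.1 (1 : ℝ) - Pi.single p.1.2 (1 : ℝ) with hvdef
  have hv_single : ∀ j : Fin n, f (Pi.single j (1 : ℝ)) = 1 := by
    intro j
    rw [hf_apply]
    simp [Pi.single_apply]
  have hvker : ∀ p : ↥T, v p ∈ LinearMap.ker f := by
    intro p
    rw [LinearMap.mem_ker, hvdef]
    simp [map_sub, hv_single]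
  -- linear independence
  have li : LinearIndependent ℝ v := by
    rw [Fintype.linearIndependent_iff]
    intro c hc
    by_contra hne
    push_neg at hne
    obtain ⟨q, hq⟩ := hne
    -- labeling according to signs of coefficients
    set g : Fin n × Fin n → Bool :=
      fun p => if h : p ∈ T then decide (0 < c ⟨p, h⟩) else true with hgdef
    obtain ⟨π, hπ⟩ := hshatter g
    have hπ' : ∀ p : ↥T, (π p.1.1 < π p.1.2 ↔ 0 < c p) := by
      intro p
      have := hπ p.1 p.2
      rw [hgdef] at this
      simp only [p.2, dif_pos] at this
      constructor
      · intro h; have : decide (0 < c ⟨p.1, p.2⟩) = true := by rw [← this]; simpa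
        simpa using this
      · intro h
        have hd : decide (0 < c ⟨p.1, p.2⟩) = true := by simpa using h
        rw [hd] at this
        simpa using of_decide_eq_true this
    -- evaluate the linear functional x ↦ ∑ i (π i) * x i
    set L : (Fin n → ℝ) →ₗ[ℝ] ℝ :=
      ∑ i : Fin n, ((π i : ℕ) : ℝ) • LinearMap.proj i with hLdef
    have hL_apply : ∀ x : Fin n → ℝ, L x = ∑ i, ((π i : ℕ) : ℝ) * x i := by
      intro x; simp [hLdef]
    have hL_single : ∀ j : Fin n, L (Pi.single j (1 : ℝ)) = ((π j : ℕ) : ℝ) := by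
      intro j
      rw [hL_apply]
      simp [Pi.single_apply]
    have hLv : ∀ p : ↥T, L (v p) = ((π p.1.1 : ℕ) : ℝ) - ((π p.1.2 : ℕ) : ℝ) := by
      intro p; rw [hvdef]; simp [map_sub, hL_single]
    have hsum : ∑ p : ↥T, c p * (((π p.1.1 : ℕ) : ℝ) - ((π p.1.2 : ℕ) : ℝ)) = 0 := by
      have := congrArg L hc
      rw [map_sum, map_zero] at this
      simpa [hLv, smul_eq_mul] using this
    -- any nonzero coefficient gives a strictly negative term
    have key : ∀ p : ↥T, c p ≠ 0 →
        c p * (((π p.1.1 : ℕ) : ℝ) - ((π p.1.2 : ℕ) : ℝ)) < 0 := by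
      intro p hp
      rcases lt_or_gt_of_ne hp with h | h
      · have hnlt : ¬ (π p.1.1 < π p.1.2) := by
          intro hlt; exact absurd ((hπ' p).1 hlt) (by linarith)
        have hne' : π p.1.1 ≠ π p.1.2 := fun he =>
          hdist p.1 p.2 (π.injective he)
        have hgt : π p.1.2 < π p.1.1 := lt_of_le_of_ne (not_lt.1 hnlt) hne'.symm
        have hd : (0 : ℝ) < ((π p.1.1 : ℕ) : ℝ) - ((π p.1.2 : ℕ) : ℝ) := by
          have h1 := Fin.lt_iff_val_lt_val.1 hgt
          have h2 : ((π p.1.2 : ℕ) : ℝ) < ((π p.1.1 : ℕ) : ℝ) := by exact_mod_cast h1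
          linarith
        exact mul_neg_of_neg_of_pos h hd
      · have hlt := (hπ' p).2 h
        have hd : ((π p.1.1 : ℕ) : ℝ) - ((π p.1.2 : ℕ) : ℝ) < 0 := by
          have h1 := Fin.lt_iff_val_lt_val.1 hlt
          have h2 : ((π p.1.1 : ℕ) : ℝ) < ((π p.1.2 : ℕ) : ℝ) := by exact_mod_cast h1
          linarith
        exact mul_neg_of_pos_of_neg h hd
    have hterm : ∀ p : ↥T, c p * (((π p.1.1 : ℕ) : ℝ) - ((π p.1.2 : ℕ) : ℝ)) ≤ 0 := by
      intro p
      by_cases hp : c p = 0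
      · simp [hp]
      · exact le_of_lt (key p hp)
    have hlt0 : ∑ p : ↥T, c p * (((π p.1.1 : ℕ) : ℝ) - ((π p.1.2 : ℕ) : ℝ))
        < ∑ _p : ↥T, (0 : ℝ) :=
      Finset.sum_lt_sum (fun p _ => hterm p) ⟨q, Finset.mem_univ q, key q hq⟩
    rw [Finset.sum_const, smul_zero] at hlt0
    linarith [hsum]
  -- vectors in the kernel, which has dimension n - 1
  set v' : ↥T → ↥(LinearMap.ker f) := fun p => ⟨v p, hvker p⟩ with hv'def
  have li' : LinearIndependent ℝ v' := by
    apply LinearIndependent.of_comp (LinearMap.ker f).subtype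
    convert li
    funext p; rfl
  have hcard : Fintype.card ↥T ≤ Module.finrank ℝ ↥(LinearMap.ker f) :=
    li'.fintype_card_le_finrank
  have hsurj : Function.Surjective f := by
    intro r
    refine ⟨r • (Pi.single (⟨0, hn⟩ : Fin n) (1 : ℝ) : Fin n → ℝ), ?_⟩
    rw [map_smul, hv_single]
    simp
  have hrange : LinearMap.range f = ⊤ := LinearMap.range_eq_top.mpr hsurj
  have hrr := LinearMap.finrank_range_add_finrank_ker f
  rw [hrange] at hrr
  simp only [finrank_top, Module.finrank_self] at hrr
  have hpi : Module.finrank ℝ (Fin n → ℝ) = n := by simp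
  rw [hpi] at hrr
  have hker : Module.finrank ℝ ↥(LinearMap.ker f) = n - 1 := by omega
  rw [hker] at hcard
  simpa [Fintype.card_coe] using hcard
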